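/- Let R be a field, G a group, J a subgroup of G, and λ a simple R[J]-module. Assume: (a) the canonical algebra homomorphism End_{R[J]}(λ) → End_{R[G]}(ind_J^G λ), sending an endomorphism ι of λ to the induced endomorphism id_{R[G]} ⊗ ι of ind_J^G λ, is surjective; and (b) for every R[G]-submodule π of ind_J^G λ, if λ is isomorphic to a quotient of the restriction π|_J, then λ is isomorphic to an R[J]-submodule of π|_J. Then ind_J^G λ is a simple R[G]-module. -/

import Mathlib

open Function
open scoped Classical

variable {R : Type*} [Field R] {G : Type*} [Group G]
variable {V : Type*} [AddCommGroup V] [Module R V]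

/-- The induced module `ind_J^G λ`, modelled as the space of functions `f : G → V`
with `f (g * j) = σ j⁻¹ (f g)` supported on finitely many left cosets of `J`
(this is the usual model of `R[G] ⊗_{R[J]} V`, with `g ⊗ v` corresponding to the function
supported on `gJ` sending `g * j` to `σ j⁻¹ v`). -/
def indCarrier (J : Subgroup G) (σ : Representation R J V) : Submodule R (G → V) where
  carrier := {f | (∀ (g : G) (j : J), f (g * (j : G)) = σ j⁻¹ (f g)) ∧
      ((QuotientGroup.mk : G → G ⧸ J) '' Function.support f).Finite}
  add_mem' := by
    rintro f g ⟨hf1, hf2⟩ ⟨hg1, hg2⟩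
    refine ⟨fun x j => by simp [hf1, hg1], ?_⟩
    refine (hf2.union hg2).subset ?_
    rw [← Set.image_union]
    exact Set.image_mono (Function.support_add _ _)
  zero_mem' := ⟨fun g j => by simp, by simp⟩
  smul_mem' := by
    rintro c f ⟨hf1, hf2⟩
    refine ⟨fun g j => by simp [hf1], ?_⟩
    exact hf2.subset (Set.image_mono (Function.support_const_smul_subset c f))

/-- The representation of `G` on the induced module `ind_J^G λ`, by left translation:
`(x • f) (g) = f (x⁻¹ * g)`. -/
def indRep (J : Subgroup G) (σ : Representation R J V) :
    Representation R G (indCarrier J σ) where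
  toFun x :=
    { toFun := fun f => ⟨fun g => (f : G → V) (x⁻¹ * g), by
        refine ⟨fun g j => ?_, ?_⟩
        · show (f : G → V) (x⁻¹ * (g * (j : G))) = σ j⁻¹ ((f : G → V) (x⁻¹ * g))
          rw [← mul_assoc]
          exact f.2.1 _ j
        refine ((f.2.2).image (fun c : G ⧸ J => x • c)).subset ?_
        rintro c ⟨g, hg, rfl⟩
        refine ⟨QuotientGroup.mk (x⁻¹ * g), ⟨x⁻¹ * g, hg, rfl⟩, ?_⟩
        show x • (QuotientGroup.mk (x⁻¹ * g) : G ⧸ J) = QuotientGroup.mk g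
        rw [MulAction.Quotient.smul_mk, smul_eq_mul, mul_inv_cancel_left]⟩
      map_add' := fun f g => Subtype.ext (funext fun g' => rfl)
      map_smul' := fun c f => Subtype.ext (funext fun g' => rfl) }
  map_one' := by
    apply LinearMap.ext; intro f
    exact Subtype.ext (funext fun g => by simp)
  map_mul' := fun x y => by
    apply LinearMap.ext; intro f
    exact Subtype.ext (funext fun g => by simp [mul_assoc])


instance (J : Subgroup G) (σ : Representation R J V) :
    AddCommGroup (indRep J σ).asModule := inferInstanceAs (AddCommGroup (indCarrier J σ))

instance {H : Type*} [Group H] (σ : Representation R H V) :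
    AddCommGroup σ.asModule := inferInstanceAs (AddCommGroup V)

/-- The endomorphism of `ind_J^G λ` induced by a `J`-equivariant endomorphism `ι` of `λ`;
this is the canonical algebra homomorphism `End_{R[J]}(λ) → End_{R[G]}(ind_J^G λ)`,
`ι ↦ id ⊗ ι`. -/
def indEnd (J : Subgroup G) (σ : Representation R J V) (ι : V →ₗ[R] V)
    (hι : ∀ (j : J) (v : V), ι (σ j v) = σ j (ι v)) :
    indCarrier J σ →ₗ[R] indCarrier J σ where
  toFun f := ⟨fun g => ι ((f : G → V) g), by
    refine ⟨fun g j => ?_, ?_⟩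
    · show ι ((f : G → V) (g * (j : G))) = σ j⁻¹ (ι ((f : G → V) g))
      rw [f.2.1 g j, hι]
    refine f.2.2.subset (Set.image_mono ?_)
    intro g hg hg0
    exact hg (by show ι ((f : G → V) g) = 0; rw [hg0]; simp)⟩
  map_add' f g := Subtype.ext (funext fun x => by
    show ι ((f : G → V) x + (g : G → V) x) = _
    rw [map_add]; rfl)
  map_smul' c f := Subtype.ext (funext fun x => by
    show ι (c • (f : G → V) x) = _
    rw [map_smul]; rfl)

/-! ### Auxiliary material -/

def auxRepSubmodule {H : Type*} [Group H] {W : Type*} [AddCommGroup W] [Module R W]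
    (ρ : Representation R H W) (p : Submodule R W)
    (hp : ∀ (h : H) (w : W), w ∈ p → ρ h w ∈ p) :
    Submodule (MonoidAlgebra R H) ρ.asModule where
  carrier := (p : Set W)
  add_mem' := fun ha hb => p.add_mem ha hb
  zero_mem' := p.zero_mem
  smul_mem' := fun a w hw => by
    show ρ.asAlgebraHom a w ∈ p
    rw [Representation.asAlgebraHom_def, MonoidAlgebra.lift_apply, Finsupp.sum]
    erw [LinearMap.sum_apply]
    exact Submodule.sum_mem p fun g _ => by
      exact p.smul_mem (a.coeff g) (hp g w hw)

theorem auxStable {H : Type*} [Group H] {W : Type*} [AddCommGroup W] [Module R W]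
    (ρ : Representation R H W) (hs : IsSimpleModule (MonoidAlgebra R H) ρ.asModule)
    (p : Submodule R W) (hp : ∀ (h : H) (w : W), w ∈ p → ρ h w ∈ p) :
    p = ⊥ ∨ p = ⊤ := by
  rcases hs.toIsSimpleOrder.2 (auxRepSubmodule ρ p hp) with h | h
  · left
    ext x
    have : x ∈ auxRepSubmodule ρ p hp ↔ x ∈ (⊥ : Submodule (MonoidAlgebra R H) ρ.asModule) :=
      by rw [h]
    exact this
  · right
    ext x
    have : x ∈ auxRepSubmodule ρ p hp ↔ x ∈ (⊤ : Submodule (MonoidAlgebra R H) ρ.asModule) :=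
      by rw [h]
    exact this

def auxResSubmodule {H : Type*} [Group H] {W : Type*} [AddCommGroup W] [Module R W]
    (ρ : Representation R H W) (q : Submodule (MonoidAlgebra R H) ρ.asModule) :
    Submodule R W where
  carrier := (q : Set ρ.asModule)
  add_mem' := fun ha hb => q.add_mem ha hb
  zero_mem' := q.zero_mem
  smul_mem' := fun r w hw => by
    have h2 : r • w = ((algebraMap R (MonoidAlgebra R H) r) • (show ρ.asModule from w) : ρ.asModule) := by
      show r • w = ρ.asAlgebraHom (algebraMap R (MonoidAlgebra R H) r) w
      rw [AlgHom.commutes]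
      simp [Module.algebraMap_end_apply]
    show r • w ∈ (q : Set ρ.asModule)
    rw [h2]
    exact q.smul_mem _ hw

theorem auxResSubmodule_mem {H : Type*} [Group H] {W : Type*} [AddCommGroup W] [Module R W]
    (ρ : Representation R H W) (q : Submodule (MonoidAlgebra R H) ρ.asModule) (w : W) :
    w ∈ auxResSubmodule ρ q ↔ w ∈ q := Iff.rfl

theorem auxResSubmodule_stable {H : Type*} [Group H] {W : Type*} [AddCommGroup W] [Module R W]
    (ρ : Representation R H W) (q : Submodule (MonoidAlgebra R H) ρ.asModule)
    (h : H) (w : W) (hw : w ∈ auxResSubmodule ρ q) : ρ h w ∈ auxResSubmodule ρ q := by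
  have h2 : ρ h w = ((MonoidAlgebra.of R H h) • (show ρ.asModule from w) : ρ.asModule) := by
    show ρ h w = ρ.asAlgebraHom (MonoidAlgebra.of R H h) w
    rw [Representation.asAlgebraHom_of]
  show ρ h w ∈ (q : Set ρ.asModule)
  rw [h2]
  exact q.smul_mem _ hw

noncomputable def auxF0 (J : Subgroup G) (σ : Representation R J V) (v : V) :
    indCarrier J σ := by
  refine ⟨fun g => if h : g ∈ J then σ (⟨g, h⟩ : J)⁻¹ v else 0, ?_, ?_⟩
  · intro g j
    by_cases h : g ∈ J
    · have hgj : g * (j : G) ∈ J := J.mul_mem h j.2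
      have : (⟨g * (j : G), hgj⟩ : J) = ⟨g, h⟩ * j := rfl
      simp only [dif_pos hgj, dif_pos h, this, mul_inv_rev, map_mul]
      rfl
    · have hgj : g * (j : G) ∉ J := fun hh => h (by simpa using J.mul_mem hh (J.inv_mem j.2))
      simp [dif_neg hgj, dif_neg h]
  · refine (Set.finite_singleton ((QuotientGroup.mk 1 : G ⧸ J))).subset ?_
    rintro c ⟨g, hg, rfl⟩
    have hgJ : g ∈ J := by
      by_contra h
      exact hg (by simp [dif_neg h])
    exact Set.mem_singleton_iff.2 (QuotientGroup.eq.2 (by simpa using J.inv_mem hgJ))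

theorem auxF0_one (J : Subgroup G) (σ : Representation R J V) (v : V) :
    (auxF0 J σ v : G → V) 1 = v := by
  have h1 : (1 : G) ∈ J := J.one_mem
  show (if h : (1:G) ∈ J then σ (⟨1, h⟩ : J)⁻¹ v else 0) = v
  rw [dif_pos h1]
  have : (⟨(1:G), h1⟩ : J) = 1 := rfl
  simp [this]

theorem auxF0_apply (J : Subgroup G) (σ : Representation R J V) (v : V) (g : G) (h : g ∈ J) :
    (auxF0 J σ v : G → V) g = σ (⟨g, h⟩ : J)⁻¹ v := by
  show (if h : g ∈ J then σ (⟨g, h⟩ : J)⁻¹ v else 0) = _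
  rw [dif_pos h]

theorem auxF0_apply_notMem (J : Subgroup G) (σ : Representation R J V) (v : V) (g : G)
    (h : g ∉ J) : (auxF0 J σ v : G → V) g = 0 := by
  show (if h : g ∈ J then σ (⟨g, h⟩ : J)⁻¹ v else 0) = 0
  rw [dif_neg h]

theorem auxRepInj {H : Type*} [Group H] {W : Type*} [AddCommGroup W] [Module R W]
    (ρ : Representation R H W) (h : H) {w : W} (hw : ρ h w = 0) : w = 0 := by
  have := congrArg (ρ h⁻¹) hw
  rwa [← LinearMap.comp_apply, ← Module.End.mul_eq_comp, ← map_mul, inv_mul_cancel, map_one,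
    Module.End.one_apply, map_zero] at this

theorem auxSigmaInj {H : Type*} [Group H] {W : Type*} [AddCommGroup W] [Module R W]
    (ρ : Representation R H W) (h : H) {w : W} (hw : w ≠ 0) : ρ h w ≠ 0 :=
  fun h0 => hw (auxRepInj ρ h h0)

/-- Criterion for irreducibility of an induced representation:
let `R` be a field, `G` a group, `J` a subgroup of `G` and `λ` a simple `R[J]`-module
(given as a representation `σ` of `J` on `V`).  Assume

(a) the canonical algebra homomorphism `End_{R[J]}(λ) → End_{R[G]}(ind_J^G λ)`,
`ι ↦ id ⊗ ι`, is surjective, i.e. every `G`-equivariant endomorphism of `ind_J^G λ` is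
induced by a `J`-equivariant endomorphism of `λ`; and

(b) for every `R[G]`-submodule `π` of `ind_J^G λ`, if `λ` is isomorphic to a quotient of
`π|_J` then `λ` is isomorphic to an `R[J]`-submodule of `π|_J`.

Then `ind_J^G λ` is a simple `R[G]`-module. -/
theorem stmt_0 (J : Subgroup G) (σ : Representation R J V)
    (hsimple : IsSimpleModule (MonoidAlgebra R J) σ.asModule)
    (ha : ∀ Φ : indCarrier J σ →ₗ[R] indCarrier J σ,
      (∀ (x : G) (f : indCarrier J σ), Φ (indRep J σ x f) = indRep J σ x (Φ f)) →
      ∃ (ι : V →ₗ[R] V) (hι : ∀ (j : J) (v : V), ι (σ j v) = σ j (ι v)),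
        Φ = indEnd J σ ι hι)
    (hb : ∀ (π : Submodule R (indCarrier J σ))
      (hπ : ∀ (x : G) (f : indCarrier J σ), f ∈ π → indRep J σ x f ∈ π),
      (∃ φ : π →ₗ[R] V, Function.Surjective φ ∧
        ∀ (j : J) (f : indCarrier J σ) (hf : f ∈ π),
          φ ⟨indRep J σ (j : G) f, hπ (j : G) f hf⟩ = σ j (φ ⟨f, hf⟩)) →
      (∃ ψ : V →ₗ[R] π, Function.Injective ψ ∧
        ∀ (j : J) (v : V),
          (↑(ψ (σ j v)) : indCarrier J σ) = indRep J σ (j : G) ↑(ψ v))) :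
    IsSimpleModule (MonoidAlgebra R G) (indRep J σ).asModule := by
  -- a nonzero vector of V
  have hVnt : Nontrivial V := by
    have := IsSimpleModule.nontrivial (MonoidAlgebra R J) σ.asModule
    exact this
  obtain ⟨v, hv⟩ := exists_ne (0 : V)
  have hf0 : auxF0 J σ v ≠ 0 := fun h => hv (by
    have := congrFun (congrArg (Subtype.val) h) 1
    rwa [auxF0_one] at this)
  haveI : Nontrivial (indRep J σ).asModule := ⟨⟨0, auxF0 J σ v, fun h => hf0 h.symm⟩⟩
  rw [isSimpleModule_iff]
  constructor
  intro q
  by_cases hq : q = ⊥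
  · exact Or.inl hq
  right
  set π := auxResSubmodule (indRep J σ) q with hπdef
  have hπ : ∀ (x : G) (f : indCarrier J σ), f ∈ π → indRep J σ x f ∈ π :=
    fun x f hf => auxResSubmodule_stable (indRep J σ) q x f hf
  -- a nonzero element of π taking nonzero value at 1
  obtain ⟨f1, hf1q, hf1ne⟩ := (Submodule.ne_bot_iff q).1 hq
  set f1' : indCarrier J σ := f1 with hf1'def
  have hf1π : f1' ∈ π := hf1q
  have hf1ne' : (f1' : G → V) ≠ 0 := fun h => hf1ne (Subtype.ext h)
  obtain ⟨g0, hg0⟩ : ∃ g0, (f1' : G → V) g0 ≠ 0 := by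
    by_contra h
    push_neg at h
    exact hf1ne' (funext h)
  set f2 : indCarrier J σ := indRep J σ g0⁻¹ f1' with hf2def
  have hf2π : f2 ∈ π := hπ _ _ hf1π
  have hf2one : (f2 : G → V) 1 = (f1' : G → V) g0 := by
    show (f1' : G → V) (g0⁻¹⁻¹ * 1) = _
    rw [inv_inv, mul_one]
  -- the evaluation-at-1 map
  set ev : π →ₗ[R] V :=
    { toFun := fun f => ((f : indCarrier J σ) : G → V) 1
      map_add' := fun f g => rfl
      map_smul' := fun r f => rfl } with hevdef
  have hev_eq : ∀ (j : J) (f : indCarrier J σ) (hf : f ∈ π),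
      ev ⟨indRep J σ (j : G) f, hπ (j : G) f hf⟩ = σ j (ev ⟨f, hf⟩) := by
    intro j f hf
    show (f : G → V) ((j : G)⁻¹ * 1) = σ j ((f : G → V) 1)
    rw [mul_one]
    have := f.2.1 1 j⁻¹
    rw [one_mul] at this
    simpa using this
  have hev_surj : Function.Surjective ev := by
    have hst : ∀ (j : J) (w : V), w ∈ LinearMap.range ev → σ j w ∈ LinearMap.range ev := by
      rintro j w ⟨⟨f, hf⟩, rfl⟩
      exact ⟨⟨indRep J σ (j : G) f, hπ _ _ hf⟩, hev_eq j f hf⟩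
    rcases auxStable σ hsimple (LinearMap.range ev) hst with h | h
    · exfalso
      have hne : ev ⟨f2, hf2π⟩ ≠ 0 := by simpa [hevdef, hf2one] using hg0
      exact hne (by
        have : ev ⟨f2, hf2π⟩ ∈ LinearMap.range ev := ⟨_, rfl⟩
        rwa [h, Submodule.mem_bot] at this)
    · intro w
      have : w ∈ LinearMap.range ev := by rw [h]; trivial
      exact this
  obtain ⟨ψ, hψinj, hψeq⟩ := hb π hπ ⟨ev, hev_surj, hev_eq⟩
  -- the G-translate building blocks
  set A : G → V → indCarrier J σ := fun g w => indRep J σ g ↑(ψ w) with hAdef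
  have hA_mem : ∀ g w, A g w ∈ π := fun g w => hπ g _ (ψ w).2
  have hA_zero : ∀ g, A g 0 = 0 := fun g => by
    simp only [hAdef, map_zero, Submodule.coe_zero]
  have hA_J : ∀ (g : G) (j : J) (w : V), A (g * (j : G)) w = A g (σ j w) := by
    intro g j w
    simp only [hAdef]
    rw [hψeq j w, map_mul]
    rfl
  -- supports are finite
  have hsupp : ∀ f : indCarrier J σ,
      (Function.support fun c : G ⧸ J =>
        A (Quotient.out c) ((f : G → V) (Quotient.out c))).Finite := by
    intro f
    refine f.2.2.subset ?_
    intro c hc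
    have hfc : (f : G → V) (Quotient.out c) ≠ 0 := by
      intro h0
      apply hc
      show A (Quotient.out c) ((f : G → V) (Quotient.out c)) = 0
      rw [h0, hA_zero]
    exact ⟨Quotient.out c, hfc, Quotient.out_eq' c⟩
  -- the big G-equivariant endomorphism, first as a bare function
  set Φ0 : indCarrier J σ → indCarrier J σ :=
    fun f => ∑ᶠ c : G ⧸ J, A (Quotient.out c) ((f : G → V) (Quotient.out c)) with hΦ0def
  have hΦ0_add : ∀ f g : indCarrier J σ, Φ0 (f + g) = Φ0 f + Φ0 g := by
    intro f g
    simp only [hΦ0def]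
    have h1 : (fun c : G ⧸ J => A (Quotient.out c) (((f + g : indCarrier J σ) : G → V) (Quotient.out c)))
        = fun c : G ⧸ J => A (Quotient.out c) ((f : G → V) (Quotient.out c))
          + A (Quotient.out c) ((g : G → V) (Quotient.out c)) := by
      funext c
      show A (Quotient.out c) ((f : G → V) (Quotient.out c) + (g : G → V) (Quotient.out c)) = _
      simp only [hAdef, map_add, Submodule.coe_add]
    rw [h1, finsum_add_distrib (hsupp f) (hsupp g)]
  have hΦ0_smul : ∀ (r : R) (f : indCarrier J σ), Φ0 (r • f) = r • Φ0 f := by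
    intro r f
    simp only [hΦ0def]
    have h1 : (fun c : G ⧸ J => A (Quotient.out c) (((r • f : indCarrier J σ) : G → V) (Quotient.out c)))
        = fun c : G ⧸ J => r • A (Quotient.out c) ((f : G → V) (Quotient.out c)) := by
      funext c
      show A (Quotient.out c) (r • (f : G → V) (Quotient.out c)) = _
      simp only [hAdef, map_smul, SetLike.val_smul]
    rw [h1]
    exact (smul_finsum' r (hsupp f)).symm
  set Φ : indCarrier J σ →ₗ[R] indCarrier J σ :=
    { toFun := Φ0, map_add' := hΦ0_add, map_smul' := hΦ0_smul } with hΦdef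
  -- equivariance of Φ
  have hΦ0_equiv : ∀ (x : G) (f : indCarrier J σ),
      Φ0 (indRep J σ x f) = indRep J σ x (Φ0 f) := by
    intro x f
    simp only [hΦ0def]
    have hR : indRep J σ x (∑ᶠ c : G ⧸ J, A (Quotient.out c) ((f : G → V) (Quotient.out c)))
        = ∑ᶠ c : G ⧸ J, indRep J σ x (A (Quotient.out c) ((f : G → V) (Quotient.out c))) :=
      (indRep J σ x).toAddMonoidHom.map_finsum (hsupp f)
    rw [hR, ← finsum_comp_equiv (MulAction.toPerm x : Equiv.Perm (G ⧸ J))]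
    refine finsum_congr fun c => ?_
    -- unfold the permutation
    show A (Quotient.out (x • c)) (((indRep J σ x f : indCarrier J σ) : G → V) (Quotient.out (x • c)))
        = indRep J σ x (A (Quotient.out c) ((f : G → V) (Quotient.out c)))
    set a := Quotient.out (x • c) with hadef
    set b := Quotient.out c with hbdef
    have hmk : (QuotientGroup.mk a : G ⧸ J) = QuotientGroup.mk (x * b) := by
      have h1 : (QuotientGroup.mk a : G ⧸ J) = x • c := QuotientGroup.out_eq' _
      have h2 : (QuotientGroup.mk b : G ⧸ J) = c := QuotientGroup.out_eq' _
      have h3 : (QuotientGroup.mk (x * b) : G ⧸ J) = x • QuotientGroup.mk b := by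
        rw [MulAction.Quotient.smul_mk, smul_eq_mul]
      rw [h1, h3, h2]
    have hj : a⁻¹ * (x * b) ∈ J := QuotientGroup.eq.1 hmk
    set j : J := ⟨a⁻¹ * (x * b), hj⟩ with hjdef
    have hxa : x⁻¹ * a = b * ((j : G))⁻¹ := by
      rw [hjdef]
      show x⁻¹ * a = b * (a⁻¹ * (x * b))⁻¹
      group
    have h1 : ((indRep J σ x f : indCarrier J σ) : G → V) a = σ j ((f : G → V) b) := by
      show (f : G → V) (x⁻¹ * a) = σ j ((f : G → V) b)
      rw [hxa]
      have := f.2.1 b j⁻¹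
      rw [show ((j⁻¹ : J) : G) = ((j : G))⁻¹ from rfl] at this
      rw [this, inv_inv]
    rw [h1, ← hA_J, show a * (j : G) = x * b by rw [hjdef]; show a * (a⁻¹ * (x * b)) = x * b; group]
    simp only [hAdef]
    rw [map_mul]
    rfl
  -- the image of Φ lies in π
  have hΦ0_mem : ∀ f : indCarrier J σ, Φ0 f ∈ π := by
    intro f
    simp only [hΦ0def]
    rw [finsum_eq_sum _ (hsupp f)]
    exact Submodule.sum_mem π fun c _ => hA_mem _ _
  -- Φ applied to the standard vector is nonzero
  have hb0 : Quotient.out (QuotientGroup.mk (1 : G) : G ⧸ J) ∈ J := by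
    have h2 : (QuotientGroup.mk (Quotient.out (QuotientGroup.mk (1 : G) : G ⧸ J)) : G ⧸ J)
        = QuotientGroup.mk (1 : G) := Quotient.out_eq' _
    have h3 := QuotientGroup.eq.1 h2
    rw [mul_one] at h3
    simpa using J.inv_mem h3
  set b0 : G := Quotient.out (QuotientGroup.mk (1 : G) : G ⧸ J) with hb0def
  have hΦ0f0 : Φ0 (auxF0 J σ v) = A b0 ((auxF0 J σ v : G → V) b0) := by
    simp only [hΦ0def]
    refine finsum_eq_single _ (QuotientGroup.mk (1 : G)) fun c hc => ?_
    have hout : Quotient.out c ∉ J := by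
      intro hmem
      apply hc
      rw [← QuotientGroup.out_eq' c]
      exact QuotientGroup.eq.2 (by simpa using J.inv_mem hmem)
    rw [auxF0_apply_notMem J σ v _ hout, hA_zero]
  have hΦ0f0_ne : Φ0 (auxF0 J σ v) ≠ 0 := by
    rw [hΦ0f0, auxF0_apply J σ v b0 hb0]
    have h1 : σ (⟨b0, hb0⟩ : J)⁻¹ v ≠ 0 := auxSigmaInj σ _ hv
    have h2 : ψ (σ (⟨b0, hb0⟩ : J)⁻¹ v) ≠ 0 := fun h =>
      h1 (hψinj (h.trans (map_zero ψ).symm))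
    have h3 : (↑(ψ (σ (⟨b0, hb0⟩ : J)⁻¹ v)) : indCarrier J σ) ≠ 0 := fun h =>
      h2 (Subtype.ext h)
    exact auxSigmaInj (indRep J σ) b0 h3
  -- apply hypothesis (a)
  obtain ⟨ι, hι, hΦeq⟩ := ha Φ hΦ0_equiv
  have hι_ne : ι ≠ 0 := by
    intro h0
    apply hΦ0f0_ne
    have : Φ (auxF0 J σ v) = 0 := by
      rw [hΦeq]
      apply Subtype.ext
      funext g
      show ι ((auxF0 J σ v : G → V) g) = 0
      rw [h0]
      rfl
    exact this
  -- ι is bijective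
  have hker : LinearMap.ker ι = ⊥ := by
    rcases auxStable σ hsimple (LinearMap.ker ι) (fun j w hw => by
      rw [LinearMap.mem_ker] at hw ⊢
      rw [hι, hw, map_zero]) with h | h
    · exact h
    · exact absurd (LinearMap.ker_eq_top.1 h) hι_ne
  have hrange : LinearMap.range ι = ⊤ := by
    rcases auxStable σ hsimple (LinearMap.range ι) (by
      rintro j w ⟨u, rfl⟩
      exact ⟨σ j u, hι j u⟩) with h | h
    · exact absurd (LinearMap.range_eq_bot.1 h) hι_ne
    · exact h
  have hbij : Function.Bijective ι :=
    ⟨LinearMap.ker_eq_bot.1 hker, LinearMap.range_eq_top.1 hrange⟩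
  set e : V ≃ₗ[R] V := LinearEquiv.ofBijective ι hbij with hedef
  have hιe : ∀ w, ι (e.symm w) = w := fun w => e.apply_symm_apply w
  have hsymm : ∀ (j : J) (w : V), e.symm (σ j w) = σ j (e.symm w) := by
    intro j w
    apply hbij.1
    show ι (e.symm (σ j w)) = ι (σ j (e.symm w))
    rw [hιe, hι, hιe]
  -- indEnd ι is surjective
  have hsurj : ∀ h : indCarrier J σ, ∃ h', indEnd J σ ι hι h' = h := by
    intro h
    refine ⟨⟨fun g => e.symm ((h : G → V) g), ?_, ?_⟩, ?_⟩
    · intro g j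
      show e.symm ((h : G → V) (g * (j : G))) = σ j⁻¹ (e.symm ((h : G → V) g))
      rw [h.2.1 g j, hsymm]
    · refine h.2.2.subset (Set.image_mono ?_)
      intro g hg
      intro h0
      apply hg
      show e.symm ((h : G → V) g) = 0
      rw [show (h : G → V) g = 0 from h0, map_zero]
    · apply Subtype.ext
      funext g
      show ι (e.symm ((h : G → V) g)) = (h : G → V) g
      exact hιe _
  -- conclude that π = everything
  have hπtop : ∀ f : indCarrier J σ, f ∈ π := by
    intro f
    obtain ⟨h', hh'⟩ := hsurj f
    have hmem : Φ h' ∈ π := hΦ0_mem h'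
    rw [hΦeq] at hmem
    rwa [hh'] at hmem
  ext w
  simp only [Submodule.mem_top, iff_true]
  exact hπtop w
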